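/- arXiv:1506.07811 — 3 statements merged into one kernel-verified Lean document; each statement's English description precedes it below -/
import Mathlib

section
/- For every ε ∈ (0,1) there exist R₀ > 0 and c₀ > 0 such that for all R > R₀ and all t_u, t_v ∈ [0,R] with t_u + t_v < R − c₀ and all θ ∈ [0,π] the following hold, where d_H(r,r',θ) = arccosh(cosh r·cosh r' − sinh r·sinh r'·cos θ): (i) if θ ≤ min(2(1−ε)·e^{(t_u+t_v−R)/2}, π), then d_H(R−t_u, R−t_v, θ) < R; (ii) if θ > min(2(1+ε)·e^{(t_u+t_v−R)/2}, π), then d_H(R−t_u, R−t_v, θ) > R. -/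
open Real Filter

noncomputable section

/-- The inverse hyperbolic cosine. -/
def arcosh (x : ℝ) : ℝ := Real.log (x + Real.sqrt (x ^ 2 - 1))

/-- The hyperbolic distance between two points at radii `r`, `r'` with relative
angle `θ`, via the hyperbolic law of cosines. -/
def hypDistPolar (r r' θ : ℝ) : ℝ :=
  _root_.arcosh (Real.cosh r * Real.cosh r' - Real.sinh r * Real.sinh r' * Real.cos θ)

lemma arcosh_lt_aux {A R : ℝ} (hA : 1 ≤ A) (hR : 0 < R) (h : A < Real.cosh R) :
    _root_.arcosh A < R := by
  have hsinh : 0 ≤ Real.sinh R := Real.sinh_nonneg_iff.mpr hR.le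
  have hsq : Real.sqrt (A ^ 2 - 1) < Real.sinh R := by
    have h1 : A ^ 2 - 1 < Real.sinh R ^ 2 := by
      rw [Real.sinh_sq]; nlinarith
    calc Real.sqrt (A ^ 2 - 1) < Real.sqrt (Real.sinh R ^ 2) :=
          Real.sqrt_lt_sqrt (by nlinarith) h1
      _ = Real.sinh R := Real.sqrt_sq hsinh
  have hlt : A + Real.sqrt (A ^ 2 - 1) < Real.exp R := by
    rw [← Real.cosh_add_sinh]; linarith
  have hpos : 0 < A + Real.sqrt (A ^ 2 - 1) := by
    have := Real.sqrt_nonneg (A ^ 2 - 1); linarith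
  calc _root_.arcosh A = Real.log (A + Real.sqrt (A ^ 2 - 1)) := rfl
    _ < Real.log (Real.exp R) := Real.log_lt_log hpos hlt
    _ = R := Real.log_exp R

lemma lt_arcosh_aux {A R : ℝ} (hR : 0 ≤ R) (h : Real.cosh R < A) :
    R < _root_.arcosh A := by
  have h1 : (1:ℝ) ≤ Real.cosh R := Real.one_le_cosh R
  have hsinh : 0 ≤ Real.sinh R := Real.sinh_nonneg_iff.mpr hR
  have hsq : Real.sinh R ≤ Real.sqrt (A ^ 2 - 1) := by
    have h2 : Real.sinh R ^ 2 ≤ A ^ 2 - 1 := by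
      rw [Real.sinh_sq]; nlinarith
    calc Real.sinh R = Real.sqrt (Real.sinh R ^ 2) := (Real.sqrt_sq hsinh).symm
      _ ≤ Real.sqrt (A ^ 2 - 1) := Real.sqrt_le_sqrt h2
  have hlt : Real.exp R < A + Real.sqrt (A ^ 2 - 1) := by
    rw [← Real.cosh_add_sinh]; linarith
  calc R = Real.log (Real.exp R) := (Real.log_exp R).symm
    _ < Real.log (A + Real.sqrt (A ^ 2 - 1)) :=
        Real.log_lt_log (Real.exp_pos R) hlt
    _ = _root_.arcosh A := rfl

lemma cosh_le_exp_abs (x : ℝ) : Real.cosh x ≤ Real.exp |x| := by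
  rw [Real.cosh_eq]
  have h1 : Real.exp x ≤ Real.exp |x| := Real.exp_le_exp.mpr (le_abs_self x)
  have h2 : Real.exp (-x) ≤ Real.exp |x| := Real.exp_le_exp.mpr (neg_le_abs x)
  linarith


private lemma aux_sq_le_one {ε : ℝ} (h0 : 0 < ε) (h1 : ε < 1) : ε ^ 2 ≤ 1 := by nlinarith

private lemma aux_four_sub {ε : ℝ} (h0 : 0 < ε) (h1 : ε < 1) : 0 ≤ 4 - (1 + ε) ^ 2 := by
  nlinarith

private lemma aux_hlin {ε d : ℝ} (hε₁ : 0 < ε) (hε₂ : ε < 1) (hd : d ≤ ε ^ 2 / 54) :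
    d + (1 - ε) ^ 2 / 2 < 1 / 2 := by
  nlinarith [mul_pos hε₁ (sub_pos.mpr hε₂)]

set_option maxHeartbeats 2000000 in
/-- Lemma 2.3 of the paper (characterization of adjacency via relative angle):
for `ε ∈ (0,1)` there are `R₀, c₀ > 0` so that for `R > R₀` and types with
`t_u + t_v < R - c₀`: if the relative angle is at most
`min(2(1-ε) e^{(t_u+t_v-R)/2}, π)` then the points are within distance `R`, and if it
exceeds `min(2(1+ε) e^{(t_u+t_v-R)/2}, π)` then they are at distance more than `R`. -/
theorem relative_angle_characterization (ε : ℝ) (hε₁ : 0 < ε) (hε₂ : ε < 1) :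
    ∃ R₀ > (0 : ℝ), ∃ c₀ > (0 : ℝ), ∀ R > R₀, ∀ tu tv : ℝ,
      tu ∈ Set.Icc 0 R → tv ∈ Set.Icc 0 R → tu + tv < R - c₀ →
      ∀ θ ∈ Set.Icc 0 π,
        (θ ≤ min (2 * (1 - ε) * Real.exp ((tu + tv - R) / 2)) π →
          hypDistPolar (R - tu) (R - tv) θ < R) ∧
        (min (2 * (1 + ε) * Real.exp ((tu + tv - R) / 2)) π < θ →
          R < hypDistPolar (R - tu) (R - tv) θ) := by
  have hlogpos : 0 < Real.log (54 / ε ^ 2) := by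
    apply Real.log_pos
    rw [lt_div_iff₀ (by positivity)]; nlinarith
  set c₀ : ℝ := Real.log (54 / ε ^ 2) + 1 with hc₀def
  have hc₀pos : 0 < c₀ := by
    show (0:ℝ) < Real.log (54 / ε ^ 2) + 1; linarith
  have hd : Real.exp (-c₀) ≤ ε ^ 2 / 54 := by
    have h54 : (0:ℝ) < 54 / ε ^ 2 := by positivity
    have heq : Real.exp (-c₀) = (ε ^ 2 / 54) * Real.exp (-1) := by
      show Real.exp (-(Real.log (54 / ε ^ 2) + 1)) = _
      rw [neg_add, Real.exp_add, Real.exp_neg, Real.exp_log h54]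
      field_simp
    have hexp1 : Real.exp (-1 : ℝ) ≤ 1 := by
      rw [show (1:ℝ) = Real.exp 0 by rw [Real.exp_zero]]
      exact Real.exp_le_exp.mpr (by norm_num)
    rw [heq]
    calc (ε ^ 2 / 54) * Real.exp (-1 : ℝ) ≤ (ε ^ 2 / 54) * 1 :=
          mul_le_mul_of_nonneg_left hexp1 (by positivity)
      _ = ε ^ 2 / 54 := mul_one _
  have hdpos : 0 < Real.exp (-c₀) := Real.exp_pos _
  clear_value c₀
  refine ⟨c₀, hc₀pos, c₀, hc₀pos, ?_⟩
  intro R hR tu tv htu htv hsum θ hθ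
  obtain ⟨htu0, htuR⟩ := htu
  obtain ⟨htv0, htvR⟩ := htv
  obtain ⟨hθ0, hθπ⟩ := hθ
  have hRpos : 0 < R := lt_trans hc₀pos hR
  set r : ℝ := R - tu with hrdef
  set r' : ℝ := R - tv with hr'def
  have hrc : c₀ < r := by rw [hrdef]; linarith
  have hr'c : c₀ < r' := by rw [hr'def]; linarith
  have hr0 : 0 < r := lt_trans hc₀pos hrc
  have hr'0 : 0 < r' := lt_trans hc₀pos hr'c
  set s : ℝ := Real.sin (θ / 2) with hsdef
  have hs0 : 0 ≤ s :=
    Real.sin_nonneg_of_nonneg_of_le_pi (by linarith) (by linarith [Real.pi_pos])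
  have hcosθ : Real.cos θ = 1 - 2 * s ^ 2 := by
    have h1 := Real.cos_two_mul (θ / 2)
    have h2 := Real.sin_sq_add_cos_sq (θ / 2)
    rw [show 2 * (θ / 2) = θ by ring] at h1
    rw [hsdef]; linarith
  set A : ℝ := Real.cosh r * Real.cosh r' - Real.sinh r * Real.sinh r' * Real.cos θ with hAdef
  have hsinhr : 0 ≤ Real.sinh r := Real.sinh_nonneg_iff.mpr hr0.le
  have hsinhr' : 0 ≤ Real.sinh r' := Real.sinh_nonneg_iff.mpr hr'0.le
  have hAeq : A = Real.cosh (r - r') + Real.sinh r * Real.sinh r' * (2 * s ^ 2) := by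
    rw [hAdef, hcosθ, Real.cosh_sub r r']; ring
  have hA1 : 1 ≤ A := by
    rw [hAeq]
    have h0 : 0 ≤ Real.sinh r * Real.sinh r' * (2 * s ^ 2) := by positivity
    linarith [Real.one_le_cosh (r - r')]
  have hhyp : hypDistPolar r r' θ = _root_.arcosh A := rfl
  clear_value r r' s A
  set X : ℝ := Real.exp ((tu + tv - R) / 2) with hXdef
  have hXpos : 0 < X := Real.exp_pos _
  have hX2 : X ^ 2 = Real.exp (tu + tv - R) := by
    rw [hXdef, sq, ← Real.exp_add]; congr 1; ring
  have hX2le : X ^ 2 ≤ Real.exp (-c₀) := by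
    rw [hX2]; exact Real.exp_le_exp.mpr (by linarith)
  have hXrr' : X ^ 2 * Real.exp (r + r') = Real.exp R := by
    rw [hX2, ← Real.exp_add, hrdef, hr'def]; congr 1; ring
  clear_value X
  constructor
  · -- part (i)
    intro hθle
    have hθle' : θ ≤ 2 * (1 - ε) * X := le_trans hθle (min_le_left _ _)
    have hεX : 0 ≤ (1 - ε) * X := mul_nonneg (by linarith) hXpos.le
    have hsle : s ≤ (1 - ε) * X := by
      calc s ≤ θ / 2 := by rw [hsdef]; exact Real.sin_le (by linarith)
        _ ≤ (1 - ε) * X := by linarith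
    have hsinh_le : Real.sinh r ≤ Real.exp r / 2 := by
      rw [Real.sinh_eq]; have := Real.exp_pos (-r); linarith
    have hsinh_le' : Real.sinh r' ≤ Real.exp r' / 2 := by
      rw [Real.sinh_eq]; have := Real.exp_pos (-r'); linarith
    have hcosh_le : Real.cosh (r - r') ≤ Real.exp (R - c₀) := by
      calc Real.cosh (r - r') ≤ Real.exp |r - r'| := cosh_le_exp_abs _
        _ ≤ Real.exp (R - c₀) := by
            apply Real.exp_le_exp.mpr
            rw [abs_le, hrdef, hr'def]
            constructor <;> linarith
    have hterm : Real.sinh r * Real.sinh r' * (2 * s ^ 2) ≤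
        (1 - ε) ^ 2 * Real.exp R / 2 := by
      have h1 : Real.sinh r * Real.sinh r' ≤ Real.exp r / 2 * (Real.exp r' / 2) :=
        mul_le_mul hsinh_le hsinh_le' hsinhr' (by positivity)
      have h2 : s ^ 2 ≤ ((1 - ε) * X) ^ 2 := sq_le_sq' (by linarith) hsle
      have h3 : Real.exp r / 2 * (Real.exp r' / 2) = Real.exp (r + r') / 4 := by
        rw [Real.exp_add]; ring
      calc Real.sinh r * Real.sinh r' * (2 * s ^ 2)
          ≤ Real.exp r / 2 * (Real.exp r' / 2) * (2 * ((1 - ε) * X) ^ 2) := by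
            apply mul_le_mul h1 (by linarith) (by positivity) (by positivity)
        _ = (1 - ε) ^ 2 * (X ^ 2 * Real.exp (r + r')) / 2 := by
            rw [show Real.exp r / 2 * (Real.exp r' / 2) = Real.exp (r + r') / 4 from h3]
            ring
        _ = (1 - ε) ^ 2 * Real.exp R / 2 := by rw [hXrr']
    have hcoshR : Real.exp R / 2 ≤ Real.cosh R := by
      rw [Real.cosh_eq]; have := Real.exp_pos (-R); linarith
    have hsplit : Real.exp (R - c₀) = Real.exp R * Real.exp (-c₀) := by
      rw [sub_eq_add_neg, Real.exp_add]
    have hexpR : 0 < Real.exp R := Real.exp_pos _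
    have hlin : Real.exp (-c₀) + (1 - ε) ^ 2 / 2 < 1 / 2 := aux_hlin hε₁ hε₂ hd
    have key : Real.exp R * Real.exp (-c₀) + (1 - ε) ^ 2 * Real.exp R / 2 <
        Real.exp R / 2 := by
      linarith only [mul_lt_mul_of_pos_right hlin hexpR]
    have hAlt : A < Real.cosh R := by
      rw [hAeq]
      calc Real.cosh (r - r') + Real.sinh r * Real.sinh r' * (2 * s ^ 2)
          ≤ Real.exp R * Real.exp (-c₀) + (1 - ε) ^ 2 * Real.exp R / 2 := by
            rw [← hsplit]; linarith
        _ < Real.exp R / 2 := key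
        _ ≤ Real.cosh R := hcoshR
    rw [hhyp]
    exact arcosh_lt_aux hA1 hRpos hAlt
  · -- part (ii)
    intro hθgt
    rcases le_or_gt π (2 * (1 + ε) * X) with hcase | hcase
    · exfalso
      rw [min_eq_right hcase] at hθgt
      linarith
    · rw [min_eq_left hcase.le] at hθgt
      set Y : ℝ := (1 + ε) * X with hYdef
      have hYpos : 0 < Y := by rw [hYdef]; positivity
      have hY2 : Y ^ 2 ≤ 4 * Real.exp (-c₀) := by
        rw [hYdef]
        have g1 : (1 + ε) ^ 2 * X ^ 2 ≤ (1 + ε) ^ 2 * Real.exp (-c₀) :=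
          mul_le_mul_of_nonneg_left hX2le (by positivity)
        have g2 : 0 ≤ (4 - (1 + ε) ^ 2) * Real.exp (-c₀) :=
          mul_nonneg (aux_four_sub hε₁ hε₂) hdpos.le
        linarith only [g1, g2]
      have hεsq : ε ^ 2 ≤ 1 := aux_sq_le_one hε₁ hε₂
      have hY1 : Y ≤ 1 := by
        have g3 : Y ^ 2 ≤ 1 := by linarith only [hY2, hd, hεsq]
        linarith only [g3, sq_nonneg (Y - 1)]
      have hYhalf : Y < π / 2 := by linarith
      have hsY : Real.sin Y ≤ s := by
        rcases eq_or_lt_of_le (show Y ≤ θ / 2 by linarith) with h | h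
        · rw [hsdef, h]
        · have := Real.strictMonoOn_sin
            (Set.mem_Icc.mpr ⟨by linarith [Real.pi_pos], hYhalf.le⟩)
            (Set.mem_Icc.mpr ⟨by linarith [Real.pi_pos], by linarith⟩) h
          rw [hsdef]; exact this.le
      have hsinY : Y - Y ^ 3 / 4 < Real.sin Y := by
        have := Real.sin_gt_sub_cube hYpos; linarith [pow_pos hYpos 3]
      have hslow : Y * (1 - Real.exp (-c₀)) < s := by
        have h4 : Y * Y ^ 2 ≤ Y * (4 * Real.exp (-c₀)) :=
          mul_le_mul_of_nonneg_left hY2 hYpos.le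
        linarith only [hsinY, hsY, h4]
      have hone : (1:ℝ) ≤ Real.exp r := Real.one_le_exp hr0.le
      have hone' : (1:ℝ) ≤ Real.exp r' := Real.one_le_exp hr'0.le
      have hsinh_ge : Real.exp r / 2 * (1 - Real.exp (-c₀)) ≤ Real.sinh r := by
        rw [Real.sinh_eq]
        have h1 : Real.exp (-r) ≤ Real.exp (-c₀) := Real.exp_le_exp.mpr (by linarith)
        linarith only [h1, mul_nonneg (sub_nonneg.mpr hone) hdpos.le]
      have hsinh_ge' : Real.exp r' / 2 * (1 - Real.exp (-c₀)) ≤ Real.sinh r' := by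
        rw [Real.sinh_eq]
        have h1 : Real.exp (-r') ≤ Real.exp (-c₀) := Real.exp_le_exp.mpr (by linarith)
        linarith only [h1, mul_nonneg (sub_nonneg.mpr hone') hdpos.le]
      have hdsmall : Real.exp (-c₀) < 1 / 2 := by linarith only [hd, hεsq]
      have hone_sub : 0 < 1 - Real.exp (-c₀) := by linarith
      have hspos : 0 < s := lt_of_le_of_lt (by positivity) hslow
      have hs2 : (Y * (1 - Real.exp (-c₀))) ^ 2 < s ^ 2 := by
        apply sq_lt_sq' _ hslow
        linarith only [mul_pos hYpos hone_sub, hs0]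
      have hsinhprod : Real.exp (r + r') / 4 * (1 - Real.exp (-c₀)) ^ 2 ≤
          Real.sinh r * Real.sinh r' := by
        have := mul_le_mul hsinh_ge hsinh_ge' (by positivity) hsinhr
        calc Real.exp (r + r') / 4 * (1 - Real.exp (-c₀)) ^ 2
            = Real.exp r / 2 * (1 - Real.exp (-c₀)) *
              (Real.exp r' / 2 * (1 - Real.exp (-c₀))) := by rw [Real.exp_add]; ring
          _ ≤ Real.sinh r * Real.sinh r' := this
      have hexprr : 0 < Real.exp (r + r') := Real.exp_pos _
      have hsinhpos : 0 < Real.sinh r * Real.sinh r' :=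
        lt_of_lt_of_le (by positivity) hsinhprod
      have hterm : (1 + ε) ^ 2 * (1 - Real.exp (-c₀)) ^ 4 * Real.exp R / 2 <
          Real.sinh r * Real.sinh r' * (2 * s ^ 2) := by
        calc (1 + ε) ^ 2 * (1 - Real.exp (-c₀)) ^ 4 * Real.exp R / 2
            = Real.exp (r + r') / 4 * (1 - Real.exp (-c₀)) ^ 2 *
              (2 * (Y * (1 - Real.exp (-c₀))) ^ 2) := by
              rw [← hXrr', hYdef]; ring
          _ ≤ Real.sinh r * Real.sinh r' * (2 * (Y * (1 - Real.exp (-c₀))) ^ 2) :=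
              mul_le_mul_of_nonneg_right hsinhprod (by positivity)
          _ < Real.sinh r * Real.sinh r' * (2 * s ^ 2) := by
              apply mul_lt_mul_of_pos_left _ hsinhpos
              linarith
      have hexpR1 : (1:ℝ) ≤ Real.exp R := Real.one_le_exp hRpos.le
      have hcoshR : Real.cosh R ≤ Real.exp R / 2 + Real.exp (-c₀) * Real.exp R / 2 := by
        rw [Real.cosh_eq]
        have h1 : Real.exp (-R) ≤ Real.exp (-c₀) := Real.exp_le_exp.mpr (by linarith)
        linarith only [h1, mul_nonneg (sub_nonneg.mpr hexpR1) hdpos.le]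
      have e1 : 1 - 2 * Real.exp (-c₀) ≤ (1 - Real.exp (-c₀)) ^ 2 := by
        linarith only [sq_nonneg (Real.exp (-c₀))]
      have e2 : 1 - 4 * Real.exp (-c₀) ≤ (1 - Real.exp (-c₀)) ^ 4 := by
        have m := mul_le_mul e1 e1 (by linarith only [hdsmall]) (by positivity)
        have n2 := sq_nonneg (Real.exp (-c₀))
        linarith only [m, n2]
      have hfac : 1 + Real.exp (-c₀) < (1 + ε) ^ 2 * (1 - Real.exp (-c₀)) ^ 4 := by
        set d := Real.exp (-c₀) with hddef
        have h5 : (1 + ε) ^ 2 * (1 - 4 * d) ≤ (1 + ε) ^ 2 * (1 - d) ^ 4 :=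
          mul_le_mul_of_nonneg_left e2 (by positivity)
        have hεd : ε * d ≤ d := by
          linarith only [mul_nonneg (sub_pos.mpr hε₂).le hdpos.le]
        have hde : d ≤ ε / 54 := by
          have := mul_nonneg hε₁.le (sub_pos.mpr hε₂).le
          rw [hddef] at *
          linarith only [hd, this]
        have hd14 : 0 ≤ 1 - 4 * d := by linarith
        have h7 : 1 + 2 * ε - 12 * d ≤ (1 + ε) ^ 2 * (1 - 4 * d) := by
          linarith only [mul_nonneg (sq_nonneg ε) hd14,
            mul_nonneg (sub_pos.mpr hε₂).le hdpos.le]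
        have h8 : 1 + d < 1 + 2 * ε - 12 * d := by linarith
        linarith
      have key : Real.exp R / 2 + Real.exp (-c₀) * Real.exp R / 2 <
          1 + (1 + ε) ^ 2 * (1 - Real.exp (-c₀)) ^ 4 * Real.exp R / 2 := by
        linarith only [mul_lt_mul_of_pos_right hfac
          (show (0:ℝ) < Real.exp R / 2 by positivity)]
      have hAgt : Real.cosh R < A := by
        rw [hAeq]
        calc Real.cosh R ≤ Real.exp R / 2 + Real.exp (-c₀) * Real.exp R / 2 := hcoshR
          _ < 1 + (1 + ε) ^ 2 * (1 - Real.exp (-c₀)) ^ 4 * Real.exp R / 2 := key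
          _ ≤ Real.cosh (r - r') + Real.sinh r * Real.sinh r' * (2 * s ^ 2) := by
              have := Real.one_le_cosh (r - r')
              linarith
      rw [hhyp]
      exact lt_arcosh_aux hRpos.le hAgt
end
end

section
/- Let R > 0 and let z = (r_z, θ_z), y = (r_y, θ_y), w = (r_w, θ_w) be points in the disk of radius R (so r_z, r_y, r_w ∈ [0,R]), such that y lies angularly between z and w: the relative angles satisfy θ_{z,y} + θ_{y,w} = θ_{z,w} ≤ π, where θ_{p,q} denotes the relative angle between p and q. If d_H(z,w) ≤ R and r_y ≤ r_w, then d_H(y,z) ≤ R. Likewise, if d_H(z,w) ≤ R and r_y ≤ r_z, then d_H(y,w) ≤ R. Here d_H is the hyperbolic distance: cosh d_H((r,θ),(r',θ')) = cosh r·cosh r' − sinh r·sinh r'·cos(θ−θ'). -/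
open Real

noncomputable section



/-- The cosh of the hyperbolic distance between two points of the hyperbolic plane
given in polar coordinates `(r, θ)`, via the hyperbolic law of cosines. -/
def coshDist (p q : ℝ × ℝ) : ℝ :=
  Real.cosh p.1 * Real.cosh q.1 - Real.sinh p.1 * Real.sinh q.1 * Real.cos (p.2 - q.2)

/-- The relative angle (in `[0, π]`) between two angular coordinates. -/
def relAngle (θ θ' : ℝ) : ℝ := |((θ - θ' : ℝ) : Real.Angle).toReal|

lemma convex_aux (A B : ℝ) (h : |B| ≤ A) : ConvexOn ℝ Set.univ (fun r => A * Real.cosh r - B * Real.sinh r) := by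
  have hd : deriv (fun r => A * Real.cosh r - B * Real.sinh r) = fun r => A * Real.sinh r - B * Real.cosh r := by
    funext r
    rw [deriv_fun_sub ((Real.differentiable_cosh r).const_mul A) ((Real.differentiable_sinh r).const_mul B),
      deriv_const_mul _ (Real.differentiable_cosh r), deriv_const_mul _ (Real.differentiable_sinh r),
      Real.deriv_cosh, Real.deriv_sinh]
  apply convexOn_of_deriv2_nonneg convex_univ
  · exact ((continuous_const.mul Real.continuous_cosh).sub (continuous_const.mul Real.continuous_sinh)).continuousOn
  · exact ((Real.differentiable_cosh.const_mul A).sub (Real.differentiable_sinh.const_mul B)).differentiableOn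
  · rw [hd]
    exact ((Real.differentiable_sinh.const_mul A).sub (Real.differentiable_cosh.const_mul B)).differentiableOn
  · intro x _
    have h2 : deriv^[2] (fun r => A * Real.cosh r - B * Real.sinh r) x = A * Real.cosh x - B * Real.sinh x := by
      simp only [Function.iterate_succ, Function.iterate_zero, Function.comp_apply, id_eq, hd]
      rw [deriv_fun_sub ((Real.differentiable_sinh x).const_mul A) ((Real.differentiable_cosh x).const_mul B),
        deriv_const_mul _ (Real.differentiable_sinh x), deriv_const_mul _ (Real.differentiable_cosh x),
        Real.deriv_cosh, Real.deriv_sinh]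
    rw [h2]
    have hA : 0 ≤ A := (abs_nonneg B).trans h
    have h1 : |B * Real.sinh x| ≤ A * Real.cosh x := by
      rw [abs_mul, Real.abs_sinh]
      calc |B| * Real.sinh |x| ≤ A * Real.cosh |x| := by
            apply mul_le_mul h _ (Real.sinh_nonneg_iff.mpr (abs_nonneg x)) hA
            have := Real.cosh_sub_sinh |x|
            nlinarith [Real.exp_pos (-|x|)]
        _ = A * Real.cosh x := by rw [Real.cosh_abs]
    have := le_abs_self (B * Real.sinh x)
    linarith

lemma key_aux (R rz ry rw φ φ1 : ℝ)
    (hz : rz ∈ Set.Icc 0 R) (hy : ry ∈ Set.Icc 0 R) (hw : rw ∈ Set.Icc 0 R)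
    (hφ1 : 0 ≤ φ1) (h12 : φ1 ≤ φ) (hφπ : φ ≤ π) (hyw : ry ≤ rw)
    (hzw : Real.cosh rz * Real.cosh rw - Real.sinh rz * Real.sinh rw * Real.cos φ ≤ Real.cosh R) :
    Real.cosh ry * Real.cosh rz - Real.sinh ry * Real.sinh rz * Real.cos φ1 ≤ Real.cosh R := by
  have hsz : 0 ≤ Real.sinh rz := Real.sinh_nonneg_iff.mpr hz.1
  have hsy : 0 ≤ Real.sinh ry := Real.sinh_nonneg_iff.mpr hy.1
  have hcos : Real.cos φ ≤ Real.cos φ1 := Real.cos_le_cos_of_nonneg_of_le_pi hφ1 hφπ h12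
  set A := Real.cosh rz with hAdef
  set B := Real.sinh rz * Real.cos φ with hBdef
  have step1 : Real.cosh ry * Real.cosh rz - Real.sinh ry * Real.sinh rz * Real.cos φ1 ≤
      A * Real.cosh ry - B * Real.sinh ry := by
    rw [hAdef, hBdef]; nlinarith [mul_nonneg hsy hsz]
  refine step1.trans ?_
  have hAB : |B| ≤ A := by
    rw [hBdef, abs_mul, abs_of_nonneg hsz]
    have h1 : Real.sinh rz * |Real.cos φ| ≤ Real.sinh rz * 1 :=
      mul_le_mul_of_nonneg_left (Real.abs_cos_le_one φ) hsz
    have h2 : Real.sinh rz ≤ Real.cosh rz := by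
      have := Real.cosh_sub_sinh rz; nlinarith [Real.exp_pos (-rz)]
    rw [mul_one] at h1; exact h1.trans h2
  have hseg : ry ∈ segment ℝ (0:ℝ) rw := by
    rw [segment_eq_Icc (hy.1.trans hyw)]; exact ⟨hy.1, hyw⟩
  have hmax := (convex_aux A B hAB).le_on_segment (Set.mem_univ 0) (Set.mem_univ rw) hseg
  refine hmax.trans (max_le ?_ ?_)
  · rw [Real.cosh_zero, Real.sinh_zero, mul_one, mul_zero, sub_zero, hAdef]
    rw [Real.cosh_le_cosh, abs_of_nonneg hz.1, abs_of_nonneg (hz.1.trans hz.2)]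
    exact hz.2
  · refine le_trans (le_of_eq ?_) hzw
    rw [hAdef, hBdef]; ring

lemma cos_relAngle (θ θ' : ℝ) : Real.cos (relAngle θ θ') = Real.cos (θ - θ') := by
  rw [relAngle, Real.cos_abs, Real.Angle.cos_toReal, Real.Angle.cos_coe]

/-- Claim 4.1 of the paper: if `y` lies angularly between `z` and `w`, the points `z`
and `w` are within hyperbolic distance `R`, and `y` has radius at most that of `w`
(resp. of `z`), then `y` is within hyperbolic distance `R` of `z` (resp. of `w`). -/
theorem between_point_adjacent (R : ℝ) (hR : 0 < R) (z y w : ℝ × ℝ)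
    (hz : z.1 ∈ Set.Icc 0 R) (hy : y.1 ∈ Set.Icc 0 R) (hw : w.1 ∈ Set.Icc 0 R)
    (hbetween : relAngle z.2 y.2 + relAngle y.2 w.2 = relAngle z.2 w.2)
    (hπ : relAngle z.2 w.2 ≤ π)
    (hzw : coshDist z w ≤ Real.cosh R) :
    (y.1 ≤ w.1 → coshDist y z ≤ Real.cosh R) ∧
    (y.1 ≤ z.1 → coshDist y w ≤ Real.cosh R) := by
  have hφ1 : 0 ≤ relAngle z.2 y.2 := abs_nonneg _
  have hφ2 : 0 ≤ relAngle y.2 w.2 := abs_nonneg _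
  have hcoszw : Real.cos (z.2 - w.2) = Real.cos (relAngle z.2 w.2) := (cos_relAngle _ _).symm
  have hzw' : Real.cosh z.1 * Real.cosh w.1 -
      Real.sinh z.1 * Real.sinh w.1 * Real.cos (relAngle z.2 w.2) ≤ Real.cosh R := by
    rw [← hcoszw]; exact hzw
  constructor
  · intro hyw
    have := key_aux R z.1 y.1 w.1 (relAngle z.2 w.2) (relAngle z.2 y.2)
      hz hy hw hφ1 (by linarith) hπ hyw hzw'
    calc coshDist y z = Real.cosh y.1 * Real.cosh z.1 -
          Real.sinh y.1 * Real.sinh z.1 * Real.cos (relAngle z.2 y.2) := by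
            rw [coshDist, cos_relAngle, ← Real.cos_neg (z.2 - y.2), neg_sub]
      _ ≤ Real.cosh R := this
  · intro hyz
    have hzw'' : Real.cosh w.1 * Real.cosh z.1 -
        Real.sinh w.1 * Real.sinh z.1 * Real.cos (relAngle z.2 w.2) ≤ Real.cosh R := by
      refine le_trans (le_of_eq ?_) hzw'; ring
    have := key_aux R w.1 y.1 z.1 (relAngle z.2 w.2) (relAngle y.2 w.2)
      hw hy hz hφ2 (by linarith) hπ hyz hzw''
    calc coshDist y w = Real.cosh y.1 * Real.cosh w.1 -
          Real.sinh y.1 * Real.sinh w.1 * Real.cos (relAngle y.2 w.2) := by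
            rw [coshDist, cos_relAngle]
      _ ≤ Real.cosh R := this
end
end

section
/- Let 1/2 < α < 1 and ν > 0, and let ω : ℕ → ℝ satisfy ω(N) → ∞ and ω(N) = o(R) as N → ∞. Then with probability tending to 1 as N → ∞, the random hyperbolic graph G(N;α,ν) contains a vertex u with radius r_u ≤ (2α−1)R/(2α) + ω(N); in particular t_u ≥ R/2 for N large (so u is in the core), and u is adjacent to every other vertex v with type t_v ≥ (2α−1)R/(2α) + ω(N). -/
open MeasureTheory Real Filter

noncomputable section

lemma coshDist_symm (p q : ℝ × ℝ) : coshDist p q = coshDist q p := by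
  unfold coshDist
  rw [show p.2 - q.2 = -(q.2 - p.2) by ring, Real.cos_neg]
  ring

/-- The hyperbolic random graph on `Fin N` determined by the vertex positions `pos`
(in polar coordinates): two distinct vertices are adjacent iff their hyperbolic distance
is at most `R`, equivalently iff the cosh of their distance is at most `cosh R`. -/
def hypGraph (N : ℕ) (R : ℝ) (pos : Fin N → ℝ × ℝ) : SimpleGraph (Fin N) where
  Adj i j := i ≠ j ∧ coshDist (pos i) (pos j) ≤ Real.cosh R
  symm := by
    constructor
    intro i j h
    exact ⟨h.1.symm, by rw [coshDist_symm]; exact h.2⟩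
  loopless := ⟨fun i h => h.1 rfl⟩

/-- The density `α sinh(α r) / (cosh(α R) - 1)` of the radius of a vertex. -/
def radiusDensity (α R r : ℝ) : ℝ :=
  if 0 ≤ r ∧ r ≤ R then α * Real.sinh (α * r) / (Real.cosh (α * R) - 1) else 0

/-- The joint density of the polar coordinates (radius, angle) of a vertex:
the radius has density `radiusDensity α R` and the angle is uniform on `[0, 2π)`. -/
def vertexDensity (α R : ℝ) (p : ℝ × ℝ) : ℝ :=
  radiusDensity α R p.1 * (if 0 ≤ p.2 ∧ p.2 < 2 * π then 1 / (2 * π) else 0)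

/-- The distribution of the position of a single vertex. -/
def vertexMeasure (α R : ℝ) : Measure (ℝ × ℝ) :=
  volume.withDensity fun p => ENNReal.ofReal (vertexDensity α R p)

/-- `R = R(N) = 2 log (N/ν)`. -/
def Rof (ν : ℝ) (N : ℕ) : ℝ := 2 * Real.log (N / ν)

/-- The joint distribution of the `N` i.i.d. vertex positions of `G(N; α, ν)`. -/
def configMeasure (α ν : ℝ) (N : ℕ) : Measure (Fin N → ℝ × ℝ) :=
  Measure.pi fun _ => vertexMeasure α (Rof ν N)

variable {α R : ℝ}

lemma cosh_sub_one_pos (hα : 0 < α) (hR : 0 < R) : 0 < Real.cosh (α * R) - 1 := by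
  have : (1:ℝ) < Real.cosh (α * R) := Real.one_lt_cosh.2 (by positivity)
  linarith

lemma radiusDensity_nonneg (hα : 0 < α) (hR : 0 < R) (r : ℝ) : 0 ≤ radiusDensity α R r := by
  unfold radiusDensity
  split_ifs with h
  · exact div_nonneg
      (mul_nonneg hα.le (Real.sinh_nonneg_iff.2 (mul_nonneg hα.le h.1)))
      (cosh_sub_one_pos hα hR).le
  · rfl

lemma measurable_radiusDensity : Measurable (radiusDensity α R) := by
  unfold radiusDensity
  exact Measurable.ite measurableSet_Icc (by fun_prop) measurable_const

lemma radial_lint (hα : 0 < α) (hR : 0 < R) {a b : ℝ} (ha : 0 ≤ a) (hab : a ≤ b) (hbR : b ≤ R) :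
    ∫⁻ r in Set.Ioc a b, ENNReal.ofReal (radiusDensity α R r)
      = ENNReal.ofReal ((Real.cosh (α * b) - Real.cosh (α * a)) / (Real.cosh (α * R) - 1)) := by
  have hc := cosh_sub_one_pos hα hR
  have hcont : Continuous fun r : ℝ => α * Real.sinh (α * r) / (Real.cosh (α * R) - 1) := by
    fun_prop
  rw [setLIntegral_congr_fun measurableSet_Ioc
    (g := fun r => ENNReal.ofReal (α * Real.sinh (α * r) / (Real.cosh (α * R) - 1)))
    (fun r hr => by
      rw [radiusDensity, if_pos ⟨ha.trans hr.1.le, hr.2.trans hbR⟩])]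
  rw [← ofReal_integral_eq_lintegral_ofReal (hcont.integrableOn_Ioc)
    (ae_restrict_of_forall_mem measurableSet_Ioc fun r hr =>
      div_nonneg (mul_nonneg hα.le (Real.sinh_nonneg_iff.2
        (mul_nonneg hα.le (ha.trans hr.1.le)))) hc.le)]
  congr 1
  rw [← intervalIntegral.integral_of_le hab]
  have key : ∀ x ∈ Set.uIcc a b,
      HasDerivAt (fun r => Real.cosh (α * r) / (Real.cosh (α * R) - 1))
        (α * Real.sinh (α * x) / (Real.cosh (α * R) - 1)) x := by
    intro x _
    have h1 : HasDerivAt (fun r : ℝ => α * r) α x := by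
      simpa using (hasDerivAt_id x).const_mul α
    have h2 := (Real.hasDerivAt_cosh (α * x)).comp x h1
    have h3 := h2.div_const (Real.cosh (α * R) - 1)
    refine h3.congr_deriv ?_
    ring
  rw [intervalIntegral.integral_eq_sub_of_hasDerivAt key
    (hcont.intervalIntegrable a b)]
  ring

lemma lint_eq_inter (T : Set ℝ) :
    ∫⁻ r in T, ENNReal.ofReal (radiusDensity α R r)
      = ∫⁻ r in T ∩ Set.Icc 0 R, ENNReal.ofReal (radiusDensity α R r) := by
  have h : ∀ r : ℝ, ENNReal.ofReal (radiusDensity α R r)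
      = (Set.Icc 0 R).indicator (fun r => ENNReal.ofReal (radiusDensity α R r)) r := by
    intro r
    by_cases hr : r ∈ Set.Icc 0 R
    · rw [Set.indicator_of_mem hr]
    · rw [Set.indicator_of_notMem hr, radiusDensity, if_neg (by simpa [Set.mem_Icc] using hr)]
      simp
  rw [lintegral_congr h]
  rw [lintegral_indicator measurableSet_Icc, Measure.restrict_restrict measurableSet_Icc,
    Set.inter_comm]

lemma lint_total (hα : 0 < α) (hR : 0 < R) :
    ∫⁻ r in Set.Icc 0 R, ENNReal.ofReal (radiusDensity α R r) = 1 := by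
  rw [Measure.restrict_congr_set Ioc_ae_eq_Icc.symm,
    radial_lint hα hR le_rfl hR.le le_rfl]
  simp [Real.cosh_zero, div_self (cosh_sub_one_pos hα hR).ne']

lemma angle_lint :
    ∫⁻ θ : ℝ, ENNReal.ofReal (if 0 ≤ θ ∧ θ < 2 * π then 1 / (2 * π) else 0) = 1 := by
  have h : ∀ θ : ℝ, ENNReal.ofReal (if 0 ≤ θ ∧ θ < 2 * π then 1 / (2 * π) else 0)
      = (Set.Ico (0:ℝ) (2 * π)).indicator (fun _ => ENNReal.ofReal (1 / (2 * π))) θ := by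
    intro θ
    by_cases hθ : θ ∈ Set.Ico (0:ℝ) (2 * π)
    · rw [Set.indicator_of_mem hθ, if_pos (by simpa [Set.mem_Ico] using hθ)]
    · rw [Set.indicator_of_notMem hθ, if_neg (by simpa [Set.mem_Ico] using hθ)]
      simp
  rw [lintegral_congr h]
  rw [lintegral_indicator measurableSet_Ico, setLIntegral_const, Real.volume_Ico,
    ← ENNReal.ofReal_mul (by positivity)]
  rw [show 1 / (2 * π) * (2 * π - 0) = 1 by rw [sub_zero]; field_simp]
  simp

lemma vertexMeasure_fst (hα : 0 < α) (hR : 0 < R) {T : Set ℝ} (hT : MeasurableSet T) :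
    vertexMeasure α R (Prod.fst ⁻¹' T)
      = ∫⁻ r in T, ENNReal.ofReal (radiusDensity α R r) := by
  rw [vertexMeasure, withDensity_apply _ (hT.preimage measurable_fst)]
  have hTT : Prod.fst ⁻¹' T = T ×ˢ (Set.univ : Set ℝ) := by
    ext p; simp
  rw [hTT, Measure.volume_eq_prod, ← Measure.prod_restrict, Measure.restrict_univ]
  have hsplit : ∀ p : ℝ × ℝ, ENNReal.ofReal (vertexDensity α R p)
      = ENNReal.ofReal (radiusDensity α R p.1)
        * ENNReal.ofReal (if 0 ≤ p.2 ∧ p.2 < 2 * π then 1 / (2 * π) else 0) := by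
    intro p
    rw [vertexDensity, ENNReal.ofReal_mul (radiusDensity_nonneg hα hR p.1)]
  simp_rw [hsplit]
  rw [lintegral_prod_mul
    (measurable_radiusDensity.ennreal_ofReal.aemeasurable)
    ((Measurable.ite measurableSet_Ico measurable_const measurable_const).ennreal_ofReal.aemeasurable),
    angle_lint, mul_one]

lemma vertexMeasure_univ (hα : 0 < α) (hR : 0 < R) :
    vertexMeasure α R Set.univ = 1 := by
  rw [← Set.preimage_univ (f := (Prod.fst : ℝ × ℝ → ℝ)),
    vertexMeasure_fst hα hR MeasurableSet.univ,
    Measure.restrict_univ, ← Measure.restrict_univ (μ := (volume : Measure ℝ)),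
    lint_eq_inter, Set.univ_inter, lint_total hα hR]


set_option maxHeartbeats 1000000 in
/-- Lemma 3.2 of the paper: for `1/2 < α < 1`, a.a.s. `G(N; α, ν)` contains a vertex of
radius at most `(2α-1)R/(2α) + ω(N)` (hence of type at least `R/2`, a core vertex),
which is adjacent to every other vertex of type at least `(2α-1)R/(2α) + ω(N)`. -/
theorem core_dominating_vertex
    (α ν : ℝ) (hα₁ : 1 / 2 < α) (hα₂ : α < 1) (hν : 0 < ν)
    (ω : ℕ → ℝ) (hω₁ : Tendsto ω atTop atTop)
    (hω₂ : Tendsto (fun N => ω N / Rof ν N) atTop (nhds 0)) :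
    Tendsto
      (fun N : ℕ =>
        configMeasure α ν N
          {pos | ∃ i : Fin N,
            (pos i).1 ≤ (2 * α - 1) * Rof ν N / (2 * α) + ω N ∧
            ∀ j : Fin N, j ≠ i →
              (2 * α - 1) * Rof ν N / (2 * α) + ω N ≤ Rof ν N - (pos j).1 →
              (hypGraph N (Rof ν N) pos).Adj i j})
      atTop (nhds 1) := by
  have hαpos : (0:ℝ) < α := by linarith
  have hRinf : Tendsto (fun N : ℕ => Rof ν N) atTop atTop := by
    have h1 : Tendsto (fun N : ℕ => (N : ℝ) / ν) atTop atTop :=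
      Tendsto.atTop_div_const hν tendsto_natCast_atTop_atTop
    exact Tendsto.const_mul_atTop two_pos (Real.tendsto_log_atTop.comp h1)
  set D : ℕ → ℝ := fun N => ν * Real.exp (α * ω N) / 2 - Real.exp (2 * α * Real.log ν) with hD
  have hDinf : Tendsto D atTop atTop := by
    apply tendsto_atTop_add_const_right
    exact Tendsto.atTop_div_const two_pos
      (Tendsto.const_mul_atTop hν
        (Real.tendsto_exp_atTop.comp (Tendsto.const_mul_atTop hαpos hω₁)))
  have hEtend : Tendsto (fun N => ENNReal.ofReal (Real.exp (-D N))) atTop (nhds 0) := by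
    rw [← ENNReal.ofReal_zero]
    exact (ENNReal.continuous_ofReal.tendsto 0).comp
      (Real.tendsto_exp_atBot.comp (tendsto_neg_atBot_iff.mpr hDinf))
  have hlow : Tendsto (fun N => 1 - ENNReal.ofReal (Real.exp (-D N))) atTop (nhds 1) := by
    have := ENNReal.Tendsto.sub
      (tendsto_const_nhds : Tendsto (fun _ : ℕ => (1 : ENNReal)) atTop (nhds 1))
      hEtend (Or.inl ENNReal.one_ne_top)
    simpa using this
  have ev1 : ∀ᶠ N : ℕ in atTop, 1 ≤ N := eventually_ge_atTop 1
  have ev2 : ∀ᶠ N : ℕ in atTop, 0 < Rof ν N := hRinf.eventually_gt_atTop 0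
  have ev3 : ∀ᶠ N : ℕ in atTop, 0 ≤ ω N := hω₁.eventually_ge_atTop 0
  have ev4 : ∀ᶠ N : ℕ in atTop, ω N ≤ Rof ν N / (2 * α) := by
    filter_upwards [hω₂.eventually_lt_const (show (0:ℝ) < 1 / (2*α) by positivity), ev2]
      with N h1 h2
    rw [div_lt_iff₀ h2] at h1
    have h3 : (0:ℝ) < 2 * α := by positivity
    rw [le_div_iff₀ h3]
    have h4 : 1 / (2 * α) * Rof ν N * (2 * α) = Rof ν N := by field_simp
    nlinarith [mul_lt_mul_of_pos_right h1 h3]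
  apply tendsto_of_tendsto_of_tendsto_of_le_of_le' hlow tendsto_const_nhds
  · -- lower bound eventually
    filter_upwards [ev1, ev2, ev3, ev4] with N hN1 hRpos hω0 hωR
    set R : ℝ := Rof ν N with hRdef
    set ρ : ℝ := (2 * α - 1) * R / (2 * α) + ω N with hρdef
    have hρ0 : 0 ≤ ρ :=
      add_nonneg (div_nonneg (mul_nonneg (by linarith) hRpos.le) (by positivity)) hω0
    have hρR : ρ ≤ R := by
      have h : (2 * α - 1) * R / (2 * α) + R / (2 * α) = R := by
        field_simp
        ring
      rw [hρdef]
      linarith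
    haveI hprob : IsProbabilityMeasure (vertexMeasure α R) := ⟨vertexMeasure_univ hαpos hRpos⟩
    have hc := cosh_sub_one_pos hαpos hRpos
    set q : ℝ := (Real.cosh (α * R) - Real.cosh (α * ρ)) / (Real.cosh (α * R) - 1) with hqdef
    have hμIoi : vertexMeasure α R (Prod.fst ⁻¹' Set.Ioi ρ) = ENNReal.ofReal q := by
      rw [vertexMeasure_fst hαpos hRpos measurableSet_Ioi, lint_eq_inter]
      have hset : Set.Ioi ρ ∩ Set.Icc 0 R = Set.Ioc ρ R := by
        ext x
        simp only [Set.mem_inter_iff, Set.mem_Ioi, Set.mem_Icc, Set.mem_Ioc]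
        constructor
        · rintro ⟨h1, _, h3⟩; exact ⟨h1, h3⟩
        · rintro ⟨h1, h3⟩; exact ⟨h1, hρ0.trans h1.le, h3⟩
      rw [hset, radial_lint hαpos hRpos hρ0 hρR le_rfl]
    have hμIcc : vertexMeasure α R (Prod.fst ⁻¹' Set.Icc 0 R) = 1 := by
      rw [vertexMeasure_fst hαpos hRpos measurableSet_Icc, lint_eq_inter, Set.inter_self,
        lint_total hαpos hRpos]
    set A : Set (Fin N → ℝ × ℝ) := Set.pi Set.univ (fun _ => Prod.fst ⁻¹' Set.Icc 0 R) with hAdef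
    set C : Set (Fin N → ℝ × ℝ) := Set.pi Set.univ (fun _ => Prod.fst ⁻¹' Set.Ioi ρ) with hCdef
    have hμA : configMeasure α ν N A = 1 := by
      rw [configMeasure, ← hRdef, Measure.pi_pi]
      simp [hμIcc]
    have hμC : configMeasure α ν N C = ENNReal.ofReal q ^ N := by
      rw [configMeasure, ← hRdef, Measure.pi_pi]
      simp [hμIoi]
    -- real estimates
    have hcoshle : Real.cosh (α * ρ) ≤ Real.cosh (α * R) :=
      Real.cosh_le_cosh.2 (by
        rw [abs_of_nonneg (by positivity), abs_of_nonneg (by positivity)]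
        exact mul_le_mul_of_nonneg_left hρR hαpos.le)
    have hq0 : 0 ≤ q := div_nonneg (by linarith) hc.le
    set F : ℝ := (Real.cosh (α * ρ) - 1) / (Real.cosh (α * R) - 1) with hFdef
    have hqF : q = 1 - F := by
      rw [hqdef, hFdef]
      field_simp
      ring
    have hF0 : 0 ≤ F := div_nonneg (by linarith [Real.one_le_cosh (α * ρ)]) hc.le
    have hFlb : Real.exp (α * ρ - α * R) / 2 - Real.exp (-(α * R)) ≤ F := by
      have h1 : (Real.exp (α * ρ) / 2 - 1) / Real.exp (α * R) ≤ F := by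
        apply div_le_div₀ (by linarith [Real.one_le_cosh (α * ρ)]) ?_ hc ?_
        · have hce := Real.cosh_eq (α * ρ)
          have hep := (Real.exp_pos (-(α * ρ))).le
          linarith
        · have hce := Real.cosh_eq (α * R)
          have h2 : Real.exp (-(α * R)) ≤ Real.exp (α * R) :=
            Real.exp_le_exp.2 (by nlinarith [mul_nonneg hαpos.le hRpos.le])
          linarith [(Real.exp_pos (α * R)).le]
      have heq : (Real.exp (α * ρ) / 2 - 1) / Real.exp (α * R)
          = Real.exp (α * ρ - α * R) / 2 - Real.exp (-(α * R)) := by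
        rw [Real.exp_sub, Real.exp_neg]
        field_simp
      rw [← heq]
      exact h1
    have hNpos : (0:ℝ) < N := by exact_mod_cast hN1
    have hNν : (0:ℝ) < (N:ℝ) / ν := div_pos hNpos hν
    have hexp1 : (N:ℝ) * (Real.exp (α * ρ - α * R) / 2) = ν * Real.exp (α * ω N) / 2 := by
      have hαρR : α * ρ - α * R = α * ω N - R / 2 := by
        rw [hρdef]
        field_simp
        ring
      have hR2 : Real.exp (R / 2) = (N:ℝ) / ν := by
        rw [hRdef, Rof, show 2 * Real.log ((N:ℝ) / ν) / 2 = Real.log ((N:ℝ) / ν) by ring]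
        exact Real.exp_log hNν
      rw [hαρR, Real.exp_sub, hR2]
      field_simp
    have hexp2 : (N:ℝ) * Real.exp (-(α * R)) ≤ Real.exp (2 * α * Real.log ν) := by
      have hlogN : 0 ≤ Real.log N := Real.log_nonneg (by exact_mod_cast hN1)
      have hsplit : -(α * R) = (-(2 * α)) * Real.log N + 2 * α * Real.log ν := by
        rw [hRdef, Rof, Real.log_div hNpos.ne' hν.ne']
        ring
      have hkey : (N:ℝ) * Real.exp ((-(2 * α)) * Real.log N) ≤ 1 := by
        have hNe : (N:ℝ) = Real.exp (Real.log N) := (Real.exp_log hNpos).symm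
        calc (N:ℝ) * Real.exp ((-(2 * α)) * Real.log N)
            = Real.exp (Real.log N + (-(2 * α)) * Real.log N) := by
              rw [Real.exp_add, ← hNe]
          _ = Real.exp ((1 - 2 * α) * Real.log N) := by ring_nf
          _ ≤ 1 := Real.exp_le_one_iff.2 (by nlinarith)
      rw [hsplit, Real.exp_add, ← mul_assoc]
      nlinarith [(Real.exp_pos (2 * α * Real.log ν)).le, hkey,
        mul_nonneg (Nat.cast_nonneg N) (Real.exp_pos ((-(2 * α)) * Real.log (N:ℝ))).le]
    have hDNF : D N ≤ (N:ℝ) * F := by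
      calc D N = (N:ℝ) * (Real.exp (α * ρ - α * R) / 2) - Real.exp (2 * α * Real.log ν) := by
            rw [hexp1]
        _ ≤ (N:ℝ) * (Real.exp (α * ρ - α * R) / 2) - (N:ℝ) * Real.exp (-(α * R)) := by
            linarith
        _ = (N:ℝ) * (Real.exp (α * ρ - α * R) / 2 - Real.exp (-(α * R))) := by ring
        _ ≤ (N:ℝ) * F := mul_le_mul_of_nonneg_left hFlb hNpos.le
    have hqN : q ^ N ≤ Real.exp (-D N) := by
      have h1 : q ≤ Real.exp (-F) := by
        rw [hqF]
        linarith [Real.add_one_le_exp (-F)]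
      calc q ^ N ≤ Real.exp (-F) ^ N := pow_le_pow_left₀ hq0 h1 N
        _ = Real.exp ((N:ℝ) * (-F)) := (Real.exp_nat_mul _ N).symm
        _ ≤ Real.exp (-D N) := Real.exp_le_exp.2 (by nlinarith)
    have hqD : ENNReal.ofReal q ^ N ≤ ENNReal.ofReal (Real.exp (-D N)) := by
      rw [← ENNReal.ofReal_pow hq0]
      exact ENNReal.ofReal_le_ofReal hqN
    -- inclusion
    have hsub : A \ C ⊆
        {pos : Fin N → ℝ × ℝ | ∃ i : Fin N,
          (pos i).1 ≤ (2 * α - 1) * R / (2 * α) + ω N ∧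
          ∀ j : Fin N, j ≠ i →
            (2 * α - 1) * R / (2 * α) + ω N ≤ R - (pos j).1 →
            (hypGraph N R pos).Adj i j} := by
      rintro pos ⟨hA', hC'⟩
      have hradii : ∀ j : Fin N, 0 ≤ (pos j).1 ∧ (pos j).1 ≤ R := by
        intro j
        have := (Set.mem_pi.1 hA') j (Set.mem_univ j)
        simpa [Set.mem_Icc] using this
      have hexi : ∃ i : Fin N, (pos i).1 ≤ ρ := by
        by_contra h
        push_neg at h
        exact hC' (Set.mem_pi.2 fun j _ => h j)
      obtain ⟨i, hi⟩ := hexi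
      refine ⟨i, hi, ?_⟩
      intro j hji hj
      refine (⟨hji.symm, ?_⟩ : i ≠ j ∧ _)
      obtain ⟨hr0, hrR⟩ := hradii i
      obtain ⟨hr0', hrR'⟩ := hradii j
      have hsum : (pos i).1 + (pos j).1 ≤ R := by
        have : ρ ≤ R - (pos j).1 := hj
        linarith
      have hsinh1 : 0 ≤ Real.sinh (pos i).1 := Real.sinh_nonneg_iff.2 hr0
      have hsinh2 : 0 ≤ Real.sinh (pos j).1 := Real.sinh_nonneg_iff.2 hr0'
      have hcos := Real.neg_one_le_cos ((pos i).2 - (pos j).2)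
      have h1 : coshDist (pos i) (pos j) ≤ Real.cosh ((pos i).1 + (pos j).1) := by
        rw [coshDist, Real.cosh_add]
        nlinarith [mul_nonneg hsinh1 hsinh2]
      have h2 : Real.cosh ((pos i).1 + (pos j).1) ≤ Real.cosh R :=
        Real.cosh_le_cosh.2 (by
          rw [abs_of_nonneg (by linarith), abs_of_nonneg hRpos.le]
          exact hsum)
      exact h1.trans h2
    calc 1 - ENNReal.ofReal (Real.exp (-D N))
        ≤ 1 - ENNReal.ofReal q ^ N := tsub_le_tsub_left hqD 1
      _ ≤ configMeasure α ν N (A \ C) := by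
          have h1 : configMeasure α ν N A
              ≤ configMeasure α ν N (A \ C) + configMeasure α ν N C :=
            (measure_mono (Set.subset_diff_union A C)).trans (measure_union_le _ _)
          rw [hμA, hμC] at h1
          exact tsub_le_iff_right.2 h1
      _ ≤ _ := measure_mono hsub
  · -- upper bound eventually
    filter_upwards [ev2] with N hRpos
    haveI : IsProbabilityMeasure (vertexMeasure α (Rof ν N)) :=
      ⟨vertexMeasure_univ hαpos hRpos⟩
    calc configMeasure α ν N _ ≤ configMeasure α ν N Set.univ :=
          measure_mono (Set.subset_univ _)
      _ = 1 := by
          rw [configMeasure, Measure.pi_univ]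
          simp [vertexMeasure_univ hαpos hRpos]
end
end
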